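/- Let Σ_S1 and Σ_S2 be the LSSs associated with two SISO SARX systems S1 = {h_q}, S2 = {g_q} of type (n_y, n_u), with n = n_y + n_u, and suppose for some mode q either h_q^{n_y} ≠ 0 or h_q^{n_y+n_u} ≠ 0. If S is an invertible matrix with S A_q = A'_q S, S B_q = B'_q, and C'_q S = C_q for all modes q (an LSS isomorphism), then S is the identity matrix. -/

import Mathlib

/-- The companion-like matrix of a SISO (S)ARX system of type `(ny, nu)` with coefficient
row `h` (0-based indexing: `h i` corresponds to `h^{i+1}` in the paper):
`A e_j = h^j e_1 + e_{j+1}` for `j ∈ {1,...,n-1} \ {n_y}`, `A e_{n_y} = h^{n_y} e_1`,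
`A e_n = h^n e_1`, where `n = n_y + n_u`. -/
def sarxCompanion (ny nu : ℕ) (h : Fin (ny + nu) → ℝ) :
    Matrix (Fin (ny + nu)) (Fin (ny + nu)) ℝ :=
  Matrix.of fun i k =>
    (if (i : ℕ) = 0 then h k else 0) +
    (if (i : ℕ) = (k : ℕ) + 1 ∧ (k : ℕ) + 1 ≠ ny then 1 else 0)

/-- The subspace `X1 = span{e_1, ..., e_{n_y}}`. -/
def sarxX1 (ny nu : ℕ) : Submodule ℝ (Fin (ny + nu) → ℝ) :=
  Submodule.span ℝ {v : Fin (ny + nu) → ℝ | ∃ i : Fin (ny + nu), (i : ℕ) < ny ∧ v = Pi.single i 1}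

/-- Pointwise formula for a row vector times the companion matrix. -/
lemma vecMul_sarxCompanion (ny nu : ℕ) (hn : 0 < ny + nu) (h w : Fin (ny + nu) → ℝ)
    (k : Fin (ny + nu)) :
    Matrix.vecMul w (sarxCompanion ny nu h) k =
      w ⟨0, hn⟩ * h k +
      (if hk : (k : ℕ) + 1 < ny + nu ∧ (k : ℕ) + 1 ≠ ny then w ⟨(k : ℕ) + 1, hk.1⟩ else 0) := by
  classical
  have hre : Matrix.vecMul w (sarxCompanion ny nu h) k
      = ∑ i : Fin (ny + nu), (w i * (if (i : ℕ) = 0 then h k else 0) +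
          w i * (if (i : ℕ) = (k : ℕ) + 1 ∧ (k : ℕ) + 1 ≠ ny then 1 else 0)) := by
    simp [Matrix.vecMul, dotProduct, sarxCompanion, mul_add]
  rw [hre, Finset.sum_add_distrib]
  have e1 : ∑ i : Fin (ny + nu), w i * (if (i : ℕ) = 0 then h k else 0)
      = w ⟨0, hn⟩ * h k := by
    rw [Finset.sum_eq_single (⟨0, hn⟩ : Fin (ny + nu))]
    · simp
    · intro b _ hb
      have : (b : ℕ) ≠ 0 := fun hb0 => hb (Fin.ext hb0)
      simp [this]
    · intro habs; exact absurd (Finset.mem_univ _) habs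
  have e2 : ∑ i : Fin (ny + nu), w i * (if (i : ℕ) = (k : ℕ) + 1 ∧ (k : ℕ) + 1 ≠ ny then 1 else 0)
      = (if hk : (k : ℕ) + 1 < ny + nu ∧ (k : ℕ) + 1 ≠ ny then w ⟨(k : ℕ) + 1, hk.1⟩ else 0) := by
    by_cases hk : (k : ℕ) + 1 < ny + nu ∧ (k : ℕ) + 1 ≠ ny
    · rw [dif_pos hk, Finset.sum_eq_single (⟨(k : ℕ) + 1, hk.1⟩ : Fin (ny + nu))]
      · simp [hk.2]
      · intro b _ hb
        have : (b : ℕ) ≠ (k : ℕ) + 1 := fun hb0 => hb (Fin.ext hb0)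
        simp [this]
      · intro habs; exact absurd (Finset.mem_univ _) habs
    · rw [dif_neg hk]
      apply Finset.sum_eq_zero
      intro i _
      have : ¬ ((i : ℕ) = (k : ℕ) + 1 ∧ (k : ℕ) + 1 ≠ ny) := by
        rintro ⟨h1, h2⟩
        exact hk ⟨h1 ▸ i.isLt, h2⟩
      simp [this]
  rw [e1, e2]

/-- Kernel lemma: a left-null row vector of the companion matrix which also vanishes at
coordinate `ny` is zero, provided `h^{ny} ≠ 0` or `h^{n} ≠ 0`. -/
lemma sarx_left_null (ny nu : ℕ) (hny : 1 ≤ ny) (hnu : 1 ≤ nu)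
    (h : Fin (ny + nu) → ℝ)
    (hh : h ⟨ny - 1, Nat.lt_of_lt_of_le (Nat.sub_lt hny Nat.one_pos) (Nat.le_add_right ny nu)⟩ ≠ 0 ∨ h ⟨ny + nu - 1, Nat.sub_lt (Nat.lt_of_lt_of_le hny (Nat.le_add_right ny nu)) Nat.one_pos⟩ ≠ 0)
    (w : Fin (ny + nu) → ℝ)
    (hw : ∀ k, Matrix.vecMul w (sarxCompanion ny nu h) k = 0)
    (hwny : w ⟨ny, Nat.lt_add_of_pos_right hnu⟩ = 0) : w = 0 := by
  have hn : 0 < ny + nu := by omega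
  have key : ∀ k, w ⟨0, hn⟩ * h k +
      (if hk : (k : ℕ) + 1 < ny + nu ∧ (k : ℕ) + 1 ≠ ny then w ⟨(k : ℕ) + 1, hk.1⟩ else 0) = 0 :=
    fun k => (vecMul_sarxCompanion ny nu hn h w k) ▸ hw k
  -- w at 0 is zero
  have hw0 : w ⟨0, hn⟩ = 0 := by
    have k1 := key ⟨ny - 1, by omega⟩
    have c1 : ¬ ((ny - 1 : ℕ) + 1 < ny + nu ∧ (ny - 1 : ℕ) + 1 ≠ ny) := by
      rintro ⟨_, h2⟩; omega
    rw [dif_neg c1, add_zero] at k1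
    have k2 := key ⟨ny + nu - 1, by omega⟩
    have c2 : ¬ ((ny + nu - 1 : ℕ) + 1 < ny + nu ∧ (ny + nu - 1 : ℕ) + 1 ≠ ny) := by
      rintro ⟨h1, _⟩; omega
    rw [dif_neg c2, add_zero] at k2
    rcases hh with hh | hh
    · exact (mul_eq_zero.mp k1).resolve_right hh
    · exact (mul_eq_zero.mp k2).resolve_right hh
  funext j
  rcases Nat.eq_zero_or_pos (j : ℕ) with hj0 | hjpos
  · have : j = ⟨0, hn⟩ := Fin.ext hj0
    rw [this, hw0]; rfl
  by_cases hjny : (j : ℕ) = ny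
  · have : j = ⟨ny, by omega⟩ := Fin.ext hjny
    rw [this, hwny]; rfl
  · have hjlt : (j : ℕ) - 1 < ny + nu := by omega
    have kj := key ⟨(j : ℕ) - 1, hjlt⟩
    have cj : ((j : ℕ) - 1 : ℕ) + 1 < ny + nu ∧ ((j : ℕ) - 1 : ℕ) + 1 ≠ ny := by
      constructor <;> omega
    rw [dif_pos cj, hw0, zero_mul, zero_add] at kj
    have : (⟨((j : ℕ) - 1 : ℕ) + 1, cj.1⟩ : Fin (ny + nu)) = j := Fin.ext (by simp; omega)
    rw [this] at kj
    exact kj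

/-- If `S` is an LSS isomorphism between the LSSs associated with two SISO SARX
systems `{h_q}`, `{g_q}` of type `(n_y, n_u)` (`S A_q = A'_q S`, `S B_q = B'_q`, `C'_q S = C_q`),
and for some mode `q` either `h_q^{n_y} ≠ 0` or `h_q^{n_y+n_u} ≠ 0`, then `S` is the identity.
Here `A_q` is the companion matrix of `h_q`, `B_q = e_{n_y+1}` and `C_q = e_1ᵀ A_q`. -/
theorem stmt15 (ny nu : ℕ) (hny : 1 ≤ ny) (hnu : 1 ≤ nu) (Q : Type)
    (hq gq : Q → Fin (ny + nu) → ℝ)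
    (hnz : ∃ q, hq q ⟨ny - 1, by omega⟩ ≠ 0 ∨ hq q ⟨ny + nu - 1, by omega⟩ ≠ 0)
    (S : Matrix (Fin (ny + nu)) (Fin (ny + nu)) ℝ) (hS : IsUnit S)
    (hA : ∀ q, S * sarxCompanion ny nu (hq q) = sarxCompanion ny nu (gq q) * S)
    (hB : S.mulVec (Pi.single (⟨ny, by omega⟩ : Fin (ny + nu)) 1) =
      Pi.single (⟨ny, by omega⟩ : Fin (ny + nu)) 1)
    (hC : ∀ q, Matrix.vecMul
        (Matrix.vecMul (Pi.single (⟨0, by omega⟩ : Fin (ny + nu)) 1)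
          (sarxCompanion ny nu (gq q))) S =
      Matrix.vecMul (Pi.single (⟨0, by omega⟩ : Fin (ny + nu)) 1)
        (sarxCompanion ny nu (hq q))) :
    S = 1 := by
  classical
  obtain ⟨q, hq0⟩ := hnz
  have hn : 0 < ny + nu := by omega
  set A := sarxCompanion ny nu (hq q) with hAdef
  set A' := sarxCompanion ny nu (gq q) with hA'def
  -- Column `ny` of `S` is `e_{ny}`.
  have hcol : ∀ i : Fin (ny + nu), S i ⟨ny, by omega⟩ = if (i : ℕ) = ny then 1 else 0 := by
    intro i
    have := congrFun hB i
    simp only [Matrix.mulVec, dotProduct] at this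
    rw [Finset.sum_eq_single (⟨ny, by omega⟩ : Fin (ny + nu))] at this
    · rw [Pi.single_apply, Pi.single_apply] at this
      simpa [Fin.ext_iff] using this
    · intro b _ hb
      rw [Pi.single_apply, if_neg hb, mul_zero]
    · intro habs; exact absurd (Finset.mem_univ _) habs
  -- the defect matrix rows
  set T : Fin (ny + nu) → Fin (ny + nu) → ℝ :=
    fun i k => S i k - (if (i : ℕ) = (k : ℕ) then 1 else 0) with hT
  have hTcol : ∀ i : Fin (ny + nu), T i ⟨ny, by omega⟩ = 0 := by
    intro i; simp [hT, hcol i]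
  -- vecMul of a single at 0 picks out row 0
  have single_vecMul : ∀ (M : Matrix (Fin (ny + nu)) (Fin (ny + nu)) ℝ) (k : Fin (ny + nu)),
      Matrix.vecMul (Pi.single (⟨0, hn⟩ : Fin (ny + nu)) 1) M k = M ⟨0, hn⟩ k := by
    intro M k
    simp only [Matrix.vecMul, dotProduct]
    rw [Finset.sum_eq_single (⟨0, hn⟩ : Fin (ny + nu))]
    · simp
    · intro b _ hb; rw [Pi.single_apply, if_neg hb, zero_mul]
    · intro habs; exact absurd (Finset.mem_univ _) habs
  -- row 0 of hC rewritten : row 0 of A' times S equals row 0 of A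
  have hC' : ∀ k, (∑ j : Fin (ny + nu), A' ⟨0, hn⟩ j * S j k) = A ⟨0, hn⟩ k := by
    intro k
    have h2 : Matrix.vecMul (Pi.single (⟨0, hn⟩ : Fin (ny + nu)) 1) A' =
        fun j => A' ⟨0, hn⟩ j := funext (single_vecMul A')
    have h1 := congrFun (hC q) k
    rw [h2] at h1
    rw [single_vecMul A k] at h1
    rw [← h1]
    simp only [Matrix.vecMul, dotProduct]
  -- row relation from hA
  have hSA : ∀ (i : Fin (ny + nu)) k, (∑ j : Fin (ny + nu), S i j * A j k) = ∑ j : Fin (ny + nu), A' i j * S j k := by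
    intro i k
    have := congrFun (congrFun (hA q) i) k
    simpa [Matrix.mul_apply] using this
  -- sum against an indicator row
  have rowsum : ∀ (i0 : Fin (ny + nu)) (f : Fin (ny + nu) → ℝ),
      (∑ j : Fin (ny + nu), (if (i0 : ℕ) = (j : ℕ) then (1:ℝ) else 0) * f j) = f i0 := by
    intro i0 f
    rw [Finset.sum_eq_single i0]
    · simp
    · intro b _ hb
      have : (i0 : ℕ) ≠ (b : ℕ) := fun hb0 => hb (Fin.ext hb0.symm)
      simp [this]
    · intro habs; exact absurd (Finset.mem_univ _) habs
  -- all rows of T vanish, by strong induction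
  have main : ∀ m, ∀ hm : m < ny + nu, T ⟨m, hm⟩ = 0 := by
    intro m
    induction m using Nat.strong_induction_on with
    | _ m ih =>
      intro hm
      apply sarx_left_null ny nu hny hnu (hq q) hq0 _ _ (hTcol _)
      intro k
      have expand : Matrix.vecMul (T ⟨m, hm⟩) A k =
          (∑ j : Fin (ny + nu), S ⟨m, hm⟩ j * A j k) -
          (∑ j : Fin (ny + nu), (if m = (j : ℕ) then (1:ℝ) else 0) * A j k) := by
        simp only [Matrix.vecMul, dotProduct, hT, sub_mul, Finset.sum_sub_distrib]
      rw [expand, hSA]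
      have eA : (∑ j : Fin (ny + nu), (if m = (j : ℕ) then (1:ℝ) else 0) * A j k) = A ⟨m, hm⟩ k :=
        rowsum ⟨m, hm⟩ (fun j => A j k)
      rw [eA]
      rcases Nat.eq_zero_or_pos m with hm0 | hmpos
      · subst hm0
        rw [hC' k]
        ring
      · -- m ≥ 1 : A' row m and A row m
        have hA'row : ∀ j : Fin (ny + nu),
            A' ⟨m, hm⟩ j = if m = (j : ℕ) + 1 ∧ (j : ℕ) + 1 ≠ ny then (1:ℝ) else 0 := by
          intro j
          have : (m : ℕ) ≠ 0 := by omega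
          simp [hA'def, sarxCompanion, this]
        have hArowk : A ⟨m, hm⟩ k = if m = (k : ℕ) + 1 ∧ (k : ℕ) + 1 ≠ ny then (1:ℝ) else 0 := by
          have : (m : ℕ) ≠ 0 := by omega
          simp [hAdef, sarxCompanion, this]
        by_cases hmny : m = ny
        · -- both terms vanish
          have z1 : (∑ j : Fin (ny + nu), A' ⟨m, hm⟩ j * S j k) = 0 := by
            apply Finset.sum_eq_zero
            intro j _
            rw [hA'row j]
            have : ¬ (m = (j : ℕ) + 1 ∧ (j : ℕ) + 1 ≠ ny) := by
              rintro ⟨h1, h2⟩; exact h2 (h1 ▸ hmny.symm ▸ rfl)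
            simp [this]
          have z2 : A ⟨m, hm⟩ k = 0 := by
            rw [hArowk]
            have : ¬ (m = (k : ℕ) + 1 ∧ (k : ℕ) + 1 ≠ ny) := by
              rintro ⟨h1, h2⟩; exact h2 (h1 ▸ hmny.symm ▸ rfl)
            simp [this]
          rw [z1, z2]; ring
        · -- reduces to row m-1 of T, zero by induction
          have hm1 : m - 1 < ny + nu := by omega
          have z1 : (∑ j : Fin (ny + nu), A' ⟨m, hm⟩ j * S j k) = S ⟨m - 1, hm1⟩ k := by
            rw [Finset.sum_eq_single (⟨m - 1, hm1⟩ : Fin (ny + nu))]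
            · rw [hA'row]
              rw [if_pos (show m = (m - 1) + 1 ∧ (m - 1) + 1 ≠ ny from ⟨by omega, by omega⟩),
                one_mul]
            · intro b _ hb
              rw [hA'row b]
              have : ¬ (m = (b : ℕ) + 1 ∧ (b : ℕ) + 1 ≠ ny) := by
                rintro ⟨h1, _⟩
                exact hb (Fin.ext (show (b : ℕ) = m - 1 by omega))
              simp [this]
            · intro habs; exact absurd (Finset.mem_univ _) habs
          have z2 : A ⟨m, hm⟩ k = if m - 1 = (k : ℕ) then (1:ℝ) else 0 := by
            rw [hArowk]
            by_cases hk : m = (k : ℕ) + 1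
            · have c2 : m - 1 = (k : ℕ) := by omega
              rw [if_pos ⟨hk, by omega⟩, if_pos c2]
            · have c1 : ¬ (m = (k : ℕ) + 1 ∧ (k : ℕ) + 1 ≠ ny) := fun h => hk h.1
              have c2 : ¬ (m - 1 = (k : ℕ)) := by omega
              simp [c1, c2]
          rw [z1, z2]
          have := congrFun (ih (m - 1) (by omega) hm1) k
          simp only [hT, Pi.zero_apply] at this
          linarith [this]
  -- conclude
  ext i k
  have := congrFun (main (i : ℕ) i.isLt ) k
  simp only [hT, Pi.zero_apply] at this
  have hSik : S i k = if (i : ℕ) = (k : ℕ) then 1 else 0 := by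
    have h2 : S ⟨(i : ℕ), i.isLt⟩ k = S i k := rfl
    rw [← h2]; linarith [this]
  rw [hSik, Matrix.one_apply]
  by_cases hik : i = k
  · simp [hik]
  · have : (i : ℕ) ≠ (k : ℕ) := fun h => hik (Fin.ext h)
    simp [hik, this]
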